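/- arXiv:0807.3644 — 6 statements merged into one kernel-verified Lean document; each statement's English description precedes it below -/
import Mathlib

section
/- Let A be symmetric positive definite, b ∈ R^n, x ∈ R^n, r = b − Ax, E an n×m matrix of distinct standard basis columns with index set J, y = (EᵀAE)^{-1}Eᵀr, and x_new = x + Ey. With d = A^{-1}b − x and d_new = A^{-1}b − x_new, one has ‖d‖_A² − ‖d_new‖_A² = (y, Eᵀr). -/
open Matrix

lemma mulVec_E_injective {n m : ℕ} (f : Fin m → Fin n) (hf : Function.Injective f)
    (E : Matrix (Fin n) (Fin m) ℝ)
    (hE : E = Matrix.of fun i j => if i = f j then (1 : ℝ) else 0)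
    (v : Fin m → ℝ) (hv : E *ᵥ v = 0) : v = 0 := by
  funext j
  have := congrFun hv (f j)
  simp only [mulVec, dotProduct, hE, Matrix.of_apply, Pi.zero_apply] at this
  rw [Finset.sum_eq_single j] at this
  · simpa using this
  · intro k _ hk
    rw [if_neg (fun h => hk (hf h.symm)), zero_mul]
  · simp

/-- With `r = b - Ax`, `y = (EᵀAE)⁻¹ Eᵀ r`, `x_new = x + E y`, `d = A⁻¹b - x`,
`d_new = A⁻¹b - x_new`, one has `‖d‖_A² - ‖d_new‖_A² = (y, Eᵀ r)`. -/
theorem stmt6 {n m : ℕ} (A : Matrix (Fin n) (Fin n) ℝ) (hA : A.PosDef)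
    (f : Fin m → Fin n) (hf : Function.Injective f)
    (E : Matrix (Fin n) (Fin m) ℝ)
    (hE : E = Matrix.of fun i j => if i = f j then (1 : ℝ) else 0)
    (b x r : Fin n → ℝ) (hr : r = b - A *ᵥ x)
    (y : Fin m → ℝ) (hy : y = (Eᵀ * A * E)⁻¹ *ᵥ (Eᵀ *ᵥ r))
    (xnew : Fin n → ℝ) (hxnew : xnew = x + E *ᵥ y)
    (d dnew : Fin n → ℝ) (hd : d = A⁻¹ *ᵥ b - x) (hdnew : dnew = A⁻¹ *ᵥ b - xnew) :
    d ⬝ᵥ A *ᵥ d - dnew ⬝ᵥ A *ᵥ dnew = y ⬝ᵥ (Eᵀ *ᵥ r) := by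
  have hAsym : Aᵀ = A := hA.1
  have hAdet : IsUnit A.det := isUnit_iff_ne_zero.mpr hA.det_pos.ne'
  -- A d = r
  have hAd : A *ᵥ d = r := by
    rw [hd, hr, mulVec_sub, mulVec_mulVec, mul_nonsing_inv A hAdet, one_mulVec]
  -- EᵀAE posdef
  have hpd : (Eᵀ * A * E).PosDef := by
    rw [posDef_iff_dotProduct_mulVec]
    constructor
    · show (Eᵀ * A * E)ᴴ = _
      simp [Matrix.conjTranspose_mul, Matrix.mul_assoc, hAsym,
        show Aᴴ = A from hAsym, show Eᴴᴴ = E from rfl]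
    · intro v hv
      have hEv : E *ᵥ v ≠ 0 := fun h => hv (mulVec_E_injective f hf E hE v h)
      have := (posDef_iff_dotProduct_mulVec.mp hA).2 hEv
      simpa [Matrix.mul_assoc, ← mulVec_mulVec, dotProduct_mulVec, vecMul_transpose,
        star_trivial] using this
  have hdetE : IsUnit (Eᵀ * A * E).det := isUnit_iff_ne_zero.mpr hpd.det_pos.ne'
  have hEy : (Eᵀ * A * E) *ᵥ y = Eᵀ *ᵥ r := by
    rw [hy, mulVec_mulVec, mul_nonsing_inv _ hdetE, one_mulVec]
  have hdnew' : dnew = d - E *ᵥ y := by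
    rw [hdnew, hxnew, hd]; abel
  -- key dot products
  have h1 : (E *ᵥ y) ⬝ᵥ (A *ᵥ d) = y ⬝ᵥ (Eᵀ *ᵥ r) := by
    rw [hAd, ← vecMul_transpose, ← dotProduct_mulVec]
  have h2 : d ⬝ᵥ (A *ᵥ (E *ᵥ y)) = y ⬝ᵥ (Eᵀ *ᵥ r) := by
    rw [dotProduct_mulVec, ← mulVec_transpose, hAsym, dotProduct_comm, h1]
  have h3 : (E *ᵥ y) ⬝ᵥ (A *ᵥ (E *ᵥ y)) = y ⬝ᵥ (Eᵀ *ᵥ r) := by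
    calc (E *ᵥ y) ⬝ᵥ (A *ᵥ (E *ᵥ y)) = y ⬝ᵥ (Eᵀ *ᵥ (A *ᵥ (E *ᵥ y))) := by
          rw [← vecMul_transpose, ← dotProduct_mulVec]
      _ = y ⬝ᵥ ((Eᵀ * A * E) *ᵥ y) := by simp [mulVec_mulVec, Matrix.mul_assoc]
      _ = y ⬝ᵥ (Eᵀ *ᵥ r) := by rw [hEy]
  rw [hdnew', mulVec_sub, dotProduct_sub, sub_dotProduct, sub_dotProduct]
  rw [h1, h2, h3]
  ring
end

section
/- Let A = (a_{ij}) be symmetric positive definite, b, x ∈ R^n, r = b − Ax, J = {i_1,…,i_m} an index set, E the corresponding matrix of standard basis columns, y = (EᵀAE)^{-1}Eᵀr, x_new = x + Ey, d = A^{-1}b − x, d_new = A^{-1}b − x_new. Then ‖d‖_A² − ‖d_new‖_A² ≥ (Σ_{k∈J} r_k²) / (Σ_{k∈J} a_{kk}). -/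
open Matrix


lemma cs_psd {m : ℕ} (B : Matrix (Fin m) (Fin m) ℝ)
    (hpsd : ∀ z : Fin m → ℝ, 0 ≤ z ⬝ᵥ B *ᵥ z)
    (hsym : ∀ u v : Fin m → ℝ, u ⬝ᵥ B *ᵥ v = v ⬝ᵥ B *ᵥ u)
    (u v : Fin m → ℝ) :
    (u ⬝ᵥ B *ᵥ v)^2 ≤ (u ⬝ᵥ B *ᵥ u) * (v ⬝ᵥ B *ᵥ v) := by
  set a := u ⬝ᵥ B *ᵥ u with ha
  set c := v ⬝ᵥ B *ᵥ v with hc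
  set p := u ⬝ᵥ B *ᵥ v with hp
  have key : ∀ t : ℝ, 0 ≤ a + 2*t*p + t^2*c := by
    intro t
    have h0 := hpsd (u + t • v)
    have heq : (u + t • v) ⬝ᵥ B *ᵥ (u + t • v) = a + 2*t*p + t^2*c := by
      rw [mulVec_add, mulVec_smul, add_dotProduct, smul_dotProduct,
        dotProduct_add, dotProduct_smul, dotProduct_add, dotProduct_smul]
      simp only [smul_eq_mul, ← ha, ← hc, ← hp]
      rw [hsym v u]
      ring
    linarith [heq ▸ h0]
  have hc0 : 0 ≤ c := hpsd v
  rcases eq_or_lt_of_le hc0 with h | h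
  · have hp0 : p = 0 := by
      by_contra hne
      have h1 := key (-(a+1)/(2*p))
      have h2 : 2 * (-(a+1)/(2*p)) * p = -(a+1) := by field_simp
      rw [← h] at h1
      nlinarith [hpsd u]
    rw [hp0, ← h]; simp [hpsd u]
  · have h1 := key (-p/c)
    have h2 : 2 * (-p/c) * p = -2*p^2/c := by ring
    have h3 : (-p/c)^2 * c = p^2/c := by field_simp
    rw [h2, h3] at h1
    have h4 : -2*p^2/c + p^2/c = -(p^2/c) := by ring
    have h5 : p^2/c ≤ a := by nlinarith [h1]
    calc p^2 = (p^2/c)*c := by field_simp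
    _ ≤ a * c := by nlinarith

lemma entry_sq_le {m : ℕ} (B : Matrix (Fin m) (Fin m) ℝ)
    (hpsd : ∀ z : Fin m → ℝ, 0 ≤ z ⬝ᵥ B *ᵥ z)
    (hsym : ∀ u v : Fin m → ℝ, u ⬝ᵥ B *ᵥ v = v ⬝ᵥ B *ᵥ u)
    (i j : Fin m) : (B i j)^2 ≤ B i i * B j j := by
  have h := cs_psd B hpsd hsym (Pi.single i 1) (Pi.single j 1)
  have key : ∀ k l : Fin m, (Pi.single k 1 : Fin m → ℝ) ⬝ᵥ B *ᵥ (Pi.single l 1) = B k l := by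
    intro k l
    rw [single_dotProduct, mulVec_single]
    simp
  rw [key i j, key i i, key j j] at h
  exact h

lemma diag_nonneg {m : ℕ} (B : Matrix (Fin m) (Fin m) ℝ)
    (hpsd : ∀ z : Fin m → ℝ, 0 ≤ z ⬝ᵥ B *ᵥ z) (i : Fin m) : 0 ≤ B i i := by
  have h := hpsd (Pi.single i 1)
  simpa using h

lemma trace_bound {m : ℕ} (B : Matrix (Fin m) (Fin m) ℝ)
    (hpsd : ∀ z : Fin m → ℝ, 0 ≤ z ⬝ᵥ B *ᵥ z)
    (hsym : ∀ u v : Fin m → ℝ, u ⬝ᵥ B *ᵥ v = v ⬝ᵥ B *ᵥ u)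
    (v : Fin m → ℝ) :
    v ⬝ᵥ B *ᵥ v ≤ (∑ j, B j j) * (v ⬝ᵥ v) := by
  have expand : v ⬝ᵥ B *ᵥ v = ∑ i, ∑ j, v i * (B i j * v j) := by
    simp [dotProduct, mulVec, Finset.mul_sum]
  rw [expand]
  have step1 : ∀ i j : Fin m, v i * (B i j * v j) ≤ (v i^2 * B j j + v j^2 * B i i)/2 := by
    intro i j
    have h1 := entry_sq_le B hpsd hsym i j
    have h2 := diag_nonneg B hpsd i
    have h3 := diag_nonneg B hpsd j
    have hX : 0 ≤ v i^2 * B j j + v j^2 * B i i := by positivity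
    have hsq : 4*(v i * (B i j * v j))^2 ≤ (v i^2 * B j j + v j^2 * B i i)^2 := by
      nlinarith [mul_le_mul_of_nonneg_left h1 (by positivity : (0:ℝ) ≤ 4*(v i)^2*(v j)^2),
        sq_nonneg (v i^2 * B j j - v j^2 * B i i)]
    nlinarith [hsq, hX]
  have key : ∑ i, ∑ j, (v i^2 * B j j + v j^2 * B i i)/2 = ∑ i, ∑ j, v i^2 * B j j := by
    have hswap : ∑ i, ∑ j, v j^2 * B i i = ∑ i, ∑ j, v i^2 * B j j := Finset.sum_comm
    simp only [add_div, Finset.sum_add_distrib, ← Finset.sum_div]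
    rw [hswap]; ring
  calc ∑ i, ∑ j, v i * (B i j * v j)
      ≤ ∑ i, ∑ j, (v i^2 * B j j + v j^2 * B i i)/2 :=
        Finset.sum_le_sum fun i _ => Finset.sum_le_sum fun j _ => step1 i j
    _ = ∑ i, ∑ j, v i^2 * B j j := key
    _ = (∑ j, B j j) * (v ⬝ᵥ v) := by
        rw [dotProduct, Finset.mul_sum]
        refine Finset.sum_congr rfl fun i _ => ?_
        rw [show (∑ j, B j j) * (v i * v i) = ∑ j, B j j * (v i * v i) from Finset.sum_mul _ _ _]
        exact Finset.sum_congr rfl fun j _ => by ring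

/-- Projection step error reduction bound:
`‖d‖_A² - ‖d_new‖_A² ≥ (Σ_{k∈J} r_k²) / (Σ_{k∈J} a_{kk})`. -/
theorem stmt7 {n m : ℕ} (hm : 0 < m) (A : Matrix (Fin n) (Fin n) ℝ) (hA : A.PosDef)
    (f : Fin m → Fin n) (hf : Function.Injective f)
    (E : Matrix (Fin n) (Fin m) ℝ)
    (hE : E = Matrix.of fun i j => if i = f j then (1 : ℝ) else 0)
    (b x r : Fin n → ℝ) (hr : r = b - A *ᵥ x)
    (y : Fin m → ℝ) (hy : y = (Eᵀ * A * E)⁻¹ *ᵥ (Eᵀ *ᵥ r))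
    (xnew : Fin n → ℝ) (hxnew : xnew = x + E *ᵥ y)
    (d dnew : Fin n → ℝ) (hd : d = A⁻¹ *ᵥ b - x) (hdnew : dnew = A⁻¹ *ᵥ b - xnew) :
    d ⬝ᵥ A *ᵥ d - dnew ⬝ᵥ A *ᵥ dnew ≥
      (∑ j : Fin m, (r (f j)) ^ 2) / (∑ j : Fin m, A (f j) (f j)) := by
  have hAt : Aᵀ = A := by
    rw [← Matrix.conjTranspose_eq_transpose_of_trivial]; exact hA.1
  have hEt : ∀ (v : Fin n → ℝ) (j : Fin m), (Eᵀ *ᵥ v) j = v (f j) := by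
    intro v j
    simp [hE, mulVec, dotProduct, transpose_apply, ite_mul]
  have hEz : ∀ (z : Fin m → ℝ) (j : Fin m), (E *ᵥ z) (f j) = z j := by
    intro z j
    simp only [hE, mulVec, dotProduct, of_apply, ite_mul, one_mul, zero_mul]
    rw [Finset.sum_eq_single j]
    · simp
    · intro l _ hl
      rw [if_neg (fun h => hl (hf h.symm))]
    · simp
  have hdot : ∀ (z : Fin m → ℝ) (v : Fin n → ℝ), z ⬝ᵥ (Eᵀ *ᵥ v) = (E *ᵥ z) ⬝ᵥ v := by
    intro z v
    rw [Matrix.dotProduct_mulVec, vecMul_transpose]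
  set B := Eᵀ * A * E with hB
  have hBdot : ∀ u w : Fin m → ℝ, u ⬝ᵥ B *ᵥ w = (E *ᵥ u) ⬝ᵥ A *ᵥ (E *ᵥ w) := by
    intro u w
    rw [hB, ← Matrix.mulVec_mulVec, ← Matrix.mulVec_mulVec, hdot]
  have hApsd : ∀ z : Fin n → ℝ, 0 ≤ z ⬝ᵥ A *ᵥ z := by
    intro z
    have := hA.posSemidef.dotProduct_mulVec_nonneg z
    simpa using this
  have hAsymdot : ∀ u w : Fin n → ℝ, u ⬝ᵥ A *ᵥ w = w ⬝ᵥ A *ᵥ u := by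
    intro u w
    rw [Matrix.dotProduct_mulVec, ← Matrix.mulVec_transpose, hAt, dotProduct_comm]
  have hBpsd : ∀ z : Fin m → ℝ, 0 ≤ z ⬝ᵥ B *ᵥ z := fun z => by
    rw [hBdot]; exact hApsd _
  have hBsym : ∀ u w : Fin m → ℝ, u ⬝ᵥ B *ᵥ w = w ⬝ᵥ B *ᵥ u := fun u w => by
    rw [hBdot, hBdot, hAsymdot]
  have hBpd : B.PosDef := by
    rw [Matrix.posDef_iff_dotProduct_mulVec]
    constructor
    · rw [Matrix.IsHermitian, Matrix.conjTranspose_eq_transpose_of_trivial, hB,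
        Matrix.transpose_mul, Matrix.transpose_mul, hAt, transpose_transpose, Matrix.mul_assoc]
    · intro z hz
      have hEzne : E *ᵥ z ≠ 0 := by
        intro h0
        apply hz
        funext j
        have := congrFun h0 (f j)
        rw [hEz z j] at this
        exact this
      have := hA.dotProduct_mulVec_pos hEzne
      simpa [hBdot] using this
  have hBdet : IsUnit B.det := isUnit_iff_ne_zero.mpr hBpd.det_pos.ne'
  have hBy : B *ᵥ y = Eᵀ *ᵥ r := by
    rw [hy, Matrix.mulVec_mulVec, Matrix.mul_nonsing_inv _ hBdet, Matrix.one_mulVec]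
  have hAdet : IsUnit A.det := isUnit_iff_ne_zero.mpr hA.det_pos.ne'
  have hAd : A *ᵥ d = r := by
    rw [hd, Matrix.mulVec_sub, Matrix.mulVec_mulVec, Matrix.mul_nonsing_inv _ hAdet,
      Matrix.one_mulVec, hr]
  have hdnew2 : dnew = d - E *ᵥ y := by
    rw [hdnew, hxnew, hd]; funext i; simp; ring
  set s : Fin m → ℝ := Eᵀ *ᵥ r with hs
  have hdiff : d ⬝ᵥ A *ᵥ d - dnew ⬝ᵥ A *ᵥ dnew = y ⬝ᵥ B *ᵥ y := by
    rw [hdnew2]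
    have e1 : (d - E *ᵥ y) ⬝ᵥ A *ᵥ (d - E *ᵥ y)
        = d ⬝ᵥ A *ᵥ d - 2 * ((E *ᵥ y) ⬝ᵥ A *ᵥ d) + (E *ᵥ y) ⬝ᵥ A *ᵥ (E *ᵥ y) := by
      rw [Matrix.mulVec_sub, sub_dotProduct, dotProduct_sub,
        dotProduct_sub, hAsymdot d (E *ᵥ y)]
      ring
    have e2 : (E *ᵥ y) ⬝ᵥ A *ᵥ d = y ⬝ᵥ B *ᵥ y := by
      rw [hAd, ← hdot y r, ← hs, ← hBy]
    have e3 : (E *ᵥ y) ⬝ᵥ A *ᵥ (E *ᵥ y) = y ⬝ᵥ B *ᵥ y := (hBdot y y).symm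
    rw [e1, e2, e3]; ring
  have hBentry : ∀ j : Fin m, B j j = A (f j) (f j) := by
    intro j
    have h1 : B j j = ∑ l, (∑ i, E i j * A i l) * E l j := by
      rw [hB]
      simp [Matrix.mul_apply]
    rw [h1]
    simp [hE, ite_mul, mul_ite]
  have num_eq : ∑ j : Fin m, (r (f j)) ^ 2 = s ⬝ᵥ s := by
    rw [dotProduct]
    exact Finset.sum_congr rfl fun j _ => by rw [hs, hEt r j]; ring
  have den_eq : ∑ j : Fin m, A (f j) (f j) = ∑ j : Fin m, B j j :=
    Finset.sum_congr rfl fun j _ => (hBentry j).symm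
  have tpos : 0 < ∑ j : Fin m, B j j := by
    apply Finset.sum_pos
    · intro j _
      have hsingle : (Pi.single j 1 : Fin m → ℝ) ≠ 0 := by
        intro h
        have := congrFun h j
        simp at this
      have := hBpd.dotProduct_mulVec_pos hsingle
      simp only [star_trivial] at this
      simpa using this
    · exact Finset.univ_nonempty_iff.mpr (Fin.pos_iff_nonempty.mp hm)
  have tpos' : 0 < ∑ j : Fin m, A (f j) (f j) := den_eq ▸ tpos
  rw [ge_iff_le, div_le_iff₀ tpos', hdiff, num_eq, den_eq]
  -- now: s ⬝ᵥ s ≤ (y ⬝ᵥ B *ᵥ y) * (∑ j, B j j)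
  have hss : 0 ≤ s ⬝ᵥ s := Finset.sum_nonneg fun i _ => mul_self_nonneg _
  have hyBy : 0 ≤ y ⬝ᵥ B *ᵥ y := hBpsd y
  have h6 : y ⬝ᵥ B *ᵥ s = s ⬝ᵥ s := by rw [hBsym y s, hBy]
  have cs := cs_psd B hBpsd hBsym y s
  rw [h6] at cs
  have tb := trace_bound B hBpsd hBsym s
  rcases eq_or_lt_of_le hss with h | h
  · rw [← h]
    positivity
  · nlinarith [mul_le_mul_of_nonneg_left tb hyBy, cs, h, hyBy, tpos]
end

section
/- Under the same setup (A SPD, r = b − Ax, projection onto coordinates J, x_new = x + E(EᵀAE)^{-1}Eᵀr, d = A^{-1}b − x, d_new = A^{-1}b − x_new), if r ≠ 0 then ‖d_new‖_A ≤ (1 − (λ_min(A)/Σ_{k∈J} a_{kk}) · (Σ_{k∈J} r_k² / Σ_{k=1}^n r_k²))^{1/2} ‖d‖_A. -/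
open Matrix

lemma aux_symm {n : ℕ} {M : Matrix (Fin n) (Fin n) ℝ} (hM : M.IsHermitian) (a b : Fin n → ℝ) :
    a ⬝ᵥ M *ᵥ b = b ⬝ᵥ M *ᵥ a := by
  rw [dotProduct_mulVec, ← mulVec_transpose, dotProduct_comm]
  congr 1
  rw [show Mᵀ = M from by simpa [conjTranspose_eq_transpose_of_trivial] using hM.eq]

lemma aux_cs {n : ℕ} {M : Matrix (Fin n) (Fin n) ℝ} (hM : M.PosSemidef) (u v : Fin n → ℝ) :
    (u ⬝ᵥ M *ᵥ v) ^ 2 ≤ (u ⬝ᵥ M *ᵥ u) * (v ⬝ᵥ M *ᵥ v) := by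
  have h : ∀ t : ℝ, 0 ≤ (v ⬝ᵥ M *ᵥ v) * (t * t) + (2 * (u ⬝ᵥ M *ᵥ v)) * t + u ⬝ᵥ M *ᵥ u := by
    intro t
    have hq := hM.dotProduct_mulVec_nonneg (u + t • v)
    simp only [star_trivial, mulVec_add, mulVec_smul, dotProduct_add, add_dotProduct,
      smul_dotProduct, dotProduct_smul, smul_eq_mul] at hq
    rw [aux_symm hM.1 v u] at hq
    calc (0:ℝ) ≤ u ⬝ᵥ M *ᵥ u + t * (u ⬝ᵥ M *ᵥ v) + t * (u ⬝ᵥ M *ᵥ v + t * (v ⬝ᵥ M *ᵥ v)) := hq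
      _ = (v ⬝ᵥ M *ᵥ v) * (t * t) + (2 * (u ⬝ᵥ M *ᵥ v)) * t + u ⬝ᵥ M *ᵥ u := by ring
  have hd := discrim_le_zero h
  rw [discrim] at hd
  nlinarith [hd]

lemma aux_entry {n : ℕ} {M : Matrix (Fin n) (Fin n) ℝ} (hM : M.PosSemidef) (i j : Fin n) :
    (M i j) ^ 2 ≤ M i i * M j j := by
  have h := aux_cs hM (Pi.single i 1) (Pi.single j 1)
  simpa [dotProduct, mulVec, Pi.single_apply, Finset.sum_ite_eq] using h

lemma aux_diag_nonneg {n : ℕ} {M : Matrix (Fin n) (Fin n) ℝ} (hM : M.PosSemidef) (i : Fin n) :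
    0 ≤ M i i := by
  have h := hM.dotProduct_mulVec_nonneg (Pi.single i 1)
  simpa [dotProduct, mulVec, Pi.single_apply, Finset.sum_ite_eq] using h

lemma aux_trace {n : ℕ} {M : Matrix (Fin n) (Fin n) ℝ} (hM : M.PosSemidef) (z : Fin n → ℝ) :
    z ⬝ᵥ M *ᵥ z ≤ (∑ i, M i i) * (z ⬝ᵥ z) := by
  have habs : ∀ i j, z i * (M i j * z j) ≤
      (Real.sqrt (M i i) * |z i|) * (Real.sqrt (M j j) * |z j|) := by
    intro i j
    have h1 : |M i j| ≤ Real.sqrt (M i i) * Real.sqrt (M j j) := by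
      rw [← Real.sqrt_sq_eq_abs, ← Real.sqrt_mul (aux_diag_nonneg hM i)]
      exact Real.sqrt_le_sqrt (aux_entry hM i j)
    calc z i * (M i j * z j) ≤ |z i * (M i j * z j)| := le_abs_self _
      _ = |z i| * |M i j| * |z j| := by rw [abs_mul, abs_mul]; ring
      _ ≤ |z i| * (Real.sqrt (M i i) * Real.sqrt (M j j)) * |z j| :=
          mul_le_mul_of_nonneg_right (mul_le_mul_of_nonneg_left h1 (abs_nonneg _)) (abs_nonneg _)
      _ = (Real.sqrt (M i i) * |z i|) * (Real.sqrt (M j j) * |z j|) := by ring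
  have step1 : z ⬝ᵥ M *ᵥ z ≤ (∑ i, Real.sqrt (M i i) * |z i|) ^ 2 := by
    have hsq : (∑ i, Real.sqrt (M i i) * |z i|) ^ 2
        = ∑ i, ∑ j, (Real.sqrt (M i i) * |z i|) * (Real.sqrt (M j j) * |z j|) := by
      rw [sq, Finset.sum_mul_sum]
    rw [hsq]
    simp only [dotProduct, mulVec, Finset.mul_sum]
    exact Finset.sum_le_sum fun i _ => Finset.sum_le_sum fun j _ => habs i j
  have step2 : (∑ i, Real.sqrt (M i i) * |z i|) ^ 2 ≤ (∑ i, M i i) * (z ⬝ᵥ z) := by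
    have h := Finset.sum_mul_sq_le_sq_mul_sq Finset.univ (fun i => Real.sqrt (M i i)) (fun i => |z i|)
    calc (∑ i, Real.sqrt (M i i) * |z i|) ^ 2
        ≤ (∑ i, Real.sqrt (M i i) ^ 2) * (∑ i, |z i| ^ 2) := h
      _ = (∑ i, M i i) * (z ⬝ᵥ z) := by
          congr 1
          · exact Finset.sum_congr rfl fun i _ => Real.sq_sqrt (aux_diag_nonneg hM i)
          · rw [dotProduct]; exact Finset.sum_congr rfl fun i _ => by rw [sq_abs, sq]
  exact step1.trans step2

lemma aux_rayleigh {n : ℕ} (A : Matrix (Fin n) (Fin n) ℝ) (hA : A.IsHermitian) (z : Fin n → ℝ) :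
    (⨅ i, hA.eigenvalues i) * (z ⬝ᵥ z) ≤ z ⬝ᵥ A *ᵥ z := by
  rcases Nat.eq_zero_or_pos n with h0 | h0
  · subst h0
    simp [dotProduct]
  haveI : Nonempty (Fin n) := Fin.pos_iff_nonempty.mp h0
  set U : Matrix (Fin n) (Fin n) ℝ := (hA.eigenvectorUnitary : Matrix (Fin n) (Fin n) ℝ) with hUdef
  have hU1 : U * star U = 1 := (Matrix.mem_unitaryGroup_iff).mp hA.eigenvectorUnitary.2
  set w : Fin n → ℝ := star U *ᵥ z with hw
  have hvm : z ᵥ* U = w := by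
    rw [hw, ← mulVec_transpose, ← conjTranspose_eq_transpose_of_trivial]
    rfl
  have hzz : z ⬝ᵥ z = w ⬝ᵥ w := by
    rw [hw, dotProduct_mulVec, ← mulVec_transpose, ← conjTranspose_eq_transpose_of_trivial,
      ← star_eq_conjTranspose, mulVec_mulVec, star_star, hU1, one_mulVec]
  have hdiag : Matrix.diagonal ((RCLike.ofReal : ℝ → ℝ) ∘ hA.eigenvalues)
      = Matrix.diagonal hA.eigenvalues := rfl
  have key : z ⬝ᵥ A *ᵥ z = w ⬝ᵥ (Matrix.diagonal hA.eigenvalues) *ᵥ w := by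
    conv_lhs => rw [hA.spectral_theorem, Unitary.conjStarAlgAut_apply]
    rw [← hUdef, ← mulVec_mulVec, ← mulVec_mulVec, dotProduct_mulVec, hvm, hdiag, ← hw]
  rw [key, hzz]
  have hsum : w ⬝ᵥ (Matrix.diagonal hA.eigenvalues) *ᵥ w = ∑ i, hA.eigenvalues i * (w i * w i) := by
    simp only [dotProduct, mulVec_diagonal]
    exact Finset.sum_congr rfl fun i _ => by ring
  rw [hsum, dotProduct, Finset.mul_sum]
  apply Finset.sum_le_sum
  intro i _
  have h1 : (⨅ j, hA.eigenvalues j) ≤ hA.eigenvalues i :=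
    ciInf_le (Set.Finite.bddBelow (Set.finite_range _)) i
  nlinarith [mul_self_nonneg (w i)]

/-- If `r ≠ 0` then
`‖d_new‖_A ≤ (1 - (λ_min(A)/Σ_{k∈J}a_{kk})·(Σ_{k∈J}r_k²/Σ_k r_k²))^{1/2} ‖d‖_A`. -/
theorem stmt8 {n m : ℕ} (hm : 0 < m) (A : Matrix (Fin n) (Fin n) ℝ) (hA : A.PosDef)
    (f : Fin m → Fin n) (hf : Function.Injective f)
    (E : Matrix (Fin n) (Fin m) ℝ)
    (hE : E = Matrix.of fun i j => if i = f j then (1 : ℝ) else 0)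
    (b x r : Fin n → ℝ) (hr : r = b - A *ᵥ x) (hr0 : r ≠ 0)
    (y : Fin m → ℝ) (hy : y = (Eᵀ * A * E)⁻¹ *ᵥ (Eᵀ *ᵥ r))
    (xnew : Fin n → ℝ) (hxnew : xnew = x + E *ᵥ y)
    (d dnew : Fin n → ℝ) (hd : d = A⁻¹ *ᵥ b - x) (hdnew : dnew = A⁻¹ *ᵥ b - xnew) :
    Real.sqrt (dnew ⬝ᵥ A *ᵥ dnew) ≤
      Real.sqrt (1 - ((⨅ i, hA.isHermitian.eigenvalues i) / ∑ j : Fin m, A (f j) (f j)) *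
          ((∑ j : Fin m, (r (f j)) ^ 2) / ∑ k : Fin n, (r k) ^ 2)) *
        Real.sqrt (d ⬝ᵥ A *ᵥ d) := by
  have hdetA : IsUnit A.det := isUnit_iff_ne_zero.mpr hA.det_pos.ne'
  haveI : Nonempty (Fin m) := Fin.pos_iff_nonempty.mp hm
  haveI : Nonempty (Fin n) := ⟨f ⟨0, hm⟩⟩
  set lam := ⨅ i, hA.isHermitian.eigenvalues i with hlam
  set M := Eᵀ * A * E with hMdef
  set S := ∑ j : Fin m, (r (f j)) ^ 2 with hS
  set R := ∑ k : Fin n, (r k) ^ 2 with hR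
  set T := ∑ j : Fin m, A (f j) (f j) with hT
  -- basic E facts
  have hEr : Eᵀ *ᵥ r = fun j => r (f j) := by
    ext j
    simp [hE, mulVec, dotProduct]
  have hEv : ∀ (w : Fin m → ℝ) (j : Fin m), (E *ᵥ w) (f j) = w j := by
    intro w j
    simp [hE, mulVec, dotProduct, hf.eq_iff]
  have hquad : ∀ w : Fin m → ℝ, w ⬝ᵥ M *ᵥ w = (E *ᵥ w) ⬝ᵥ A *ᵥ (E *ᵥ w) := by
    intro w
    rw [hMdef, ← mulVec_mulVec, ← mulVec_mulVec, dotProduct_mulVec, vecMul_transpose]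
  have hMpos : M.PosDef := by
    refine Matrix.PosDef.of_dotProduct_mulVec_pos ?_ ?_
    · rw [hMdef, ← conjTranspose_eq_transpose_of_trivial E]
      exact isHermitian_conjTranspose_mul_mul E hA.isHermitian
    · intro v hv
      rw [star_trivial, hquad v]
      have hne : E *ᵥ v ≠ 0 := by
        intro hEv0
        apply hv
        ext j
        have := congrFun hEv0 (f j)
        rw [hEv v j] at this
        simpa using this
      have := hA.dotProduct_mulVec_pos hne
      rwa [star_trivial] at this
  have hdetM : IsUnit M.det := isUnit_iff_ne_zero.mpr hMpos.det_pos.ne'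
  have hMy : M *ᵥ y = Eᵀ *ᵥ r := by
    rw [hy, mulVec_mulVec, Matrix.mul_nonsing_inv _ hdetM, one_mulVec]
  have hAd : A *ᵥ d = r := by
    rw [hd, mulVec_sub, mulVec_mulVec, Matrix.mul_nonsing_inv _ hdetA, one_mulVec, hr]
  have hdnew2 : dnew = d - E *ᵥ y := by
    rw [hdnew, hxnew, hd]
    abel
  set P := y ⬝ᵥ (Eᵀ *ᵥ r) with hPdef
  have hEyr : (E *ᵥ y) ⬝ᵥ r = P := by
    rw [dotProduct_comm, dotProduct_mulVec, ← mulVec_transpose, dotProduct_comm]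
  have hcentral : dnew ⬝ᵥ A *ᵥ dnew = d ⬝ᵥ A *ᵥ d - P := by
    rw [hdnew2, mulVec_sub, sub_dotProduct, dotProduct_sub, dotProduct_sub]
    have t1 : d ⬝ᵥ A *ᵥ (E *ᵥ y) = P := by
      rw [aux_symm hA.isHermitian, hAd, hEyr]
    have t2 : (E *ᵥ y) ⬝ᵥ A *ᵥ d = P := by rw [hAd, hEyr]
    have t3 : (E *ᵥ y) ⬝ᵥ A *ᵥ (E *ᵥ y) = P := by rw [← hquad y, hMy]
    rw [t1, t2, t3]
    ring
  have hP0 : 0 ≤ P := by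
    have := hMpos.posSemidef.dotProduct_mulVec_nonneg y
    rwa [star_trivial, hMy] at this
  have hD0 : 0 ≤ d ⬝ᵥ A *ᵥ d := by
    have := hA.posSemidef.dotProduct_mulVec_nonneg d
    rwa [star_trivial] at this
  have hzS : (Eᵀ *ᵥ r) ⬝ᵥ (Eᵀ *ᵥ r) = S := by
    rw [hEr, hS]
    simp [dotProduct, pow_two]
  have hS0 : 0 ≤ S := Finset.sum_nonneg fun _ _ => sq_nonneg _
  have hR0 : 0 < R := by
    obtain ⟨k, hk⟩ : ∃ k, r k ≠ 0 := by
      by_contra h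
      push_neg at h
      exact hr0 (funext h)
    exact Finset.sum_pos' (fun i _ => sq_nonneg _) ⟨k, Finset.mem_univ k, by positivity⟩
  have hdiagA : ∀ i, 0 < A i i := by
    intro i
    have hne : (Pi.single i 1 : Fin n → ℝ) ≠ 0 := by
      intro h
      have h1 := congrFun h i
      simp [Pi.single_apply] at h1
    have := hA.dotProduct_mulVec_pos hne
    simpa [star_trivial, dotProduct, mulVec, Pi.single_apply, Finset.sum_ite_eq] using this
  have hT0 : 0 < T := Finset.sum_pos (fun j _ => hdiagA (f j)) Finset.univ_nonempty
  have hMdiag : ∀ j, M j j = A (f j) (f j) := by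
    intro j
    rw [hMdef]
    simp [hE, Matrix.mul_apply]
  have hTM : (∑ j, M j j) = T := Finset.sum_congr rfl fun j _ => hMdiag j
  -- S ≤ T * P
  have hSTP : S ≤ T * P := by
    have hcs := aux_cs hMpos.posSemidef (Eᵀ *ᵥ r) y
    rw [hMy, hzS] at hcs
    have htr := aux_trace hMpos.posSemidef (Eᵀ *ᵥ r)
    rw [hzS, hTM] at htr
    rcases hS0.eq_or_lt with h | h
    · rw [← h]
      exact mul_nonneg hT0.le hP0
    · have h6 : S * S ≤ S * (T * P) := by
        calc S * S = S ^ 2 := (sq S).symm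
          _ ≤ ((Eᵀ *ᵥ r) ⬝ᵥ M *ᵥ (Eᵀ *ᵥ r)) * P := hcs
          _ ≤ (T * S) * P := mul_le_mul_of_nonneg_right htr hP0
          _ = S * (T * P) := by ring
      exact le_of_mul_le_mul_left h6 h
  -- lam * D ≤ R
  have hlam0 : 0 ≤ lam := le_ciInf fun i => (hA.eigenvalues_pos i).le
  have hray := aux_rayleigh A hA.isHermitian d
  rw [← hlam] at hray
  have hDr : d ⬝ᵥ A *ᵥ d = d ⬝ᵥ r := by rw [hAd]
  have hcs2 : (d ⬝ᵥ A *ᵥ d) ^ 2 ≤ (d ⬝ᵥ d) * (r ⬝ᵥ r) := by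
    rw [hDr]
    have h := Finset.sum_mul_sq_le_sq_mul_sq Finset.univ d r
    simpa [dotProduct, pow_two] using h
  have hrR : r ⬝ᵥ r = R := by
    rw [hR]
    simp [dotProduct, pow_two]
  rw [hrR] at hcs2
  have hdd0 : 0 ≤ d ⬝ᵥ d := Finset.sum_nonneg fun i _ => mul_self_nonneg _
  have hlamDR : lam * (d ⬝ᵥ A *ᵥ d) ≤ R := by
    rcases hdd0.eq_or_lt with h | h
    · have hD2 : (d ⬝ᵥ A *ᵥ d) ^ 2 ≤ 0 := by
        rw [← h, zero_mul] at hcs2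
        exact hcs2
      have hDz : d ⬝ᵥ A *ᵥ d = 0 := pow_eq_zero_iff two_ne_zero |>.mp
        (le_antisymm hD2 (sq_nonneg _))
      rw [hDz, mul_zero]
      exact hR0.le
    · have h5 : lam * (d ⬝ᵥ A *ᵥ d) * (d ⬝ᵥ d) ≤ (d ⬝ᵥ A *ᵥ d) * (d ⬝ᵥ A *ᵥ d) := by
        calc lam * (d ⬝ᵥ A *ᵥ d) * (d ⬝ᵥ d) = (lam * (d ⬝ᵥ d)) * (d ⬝ᵥ A *ᵥ d) := by ring
          _ ≤ (d ⬝ᵥ A *ᵥ d) * (d ⬝ᵥ A *ᵥ d) := mul_le_mul_of_nonneg_right hray hD0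
      have h6 : (d ⬝ᵥ A *ᵥ d) * (d ⬝ᵥ A *ᵥ d) ≤ (d ⬝ᵥ d) * R := by
        rw [← sq]
        exact hcs2
      have h7 : lam * (d ⬝ᵥ A *ᵥ d) * (d ⬝ᵥ d) ≤ (d ⬝ᵥ d) * R := h5.trans h6
      nlinarith [h7, h]
  -- c * D ≤ P
  have hcDP : (lam / T) * (S / R) * (d ⬝ᵥ A *ᵥ d) ≤ P := by
    rw [div_mul_div_comm, div_mul_eq_mul_div, div_le_iff₀ (by positivity)]
    calc lam * S * (d ⬝ᵥ A *ᵥ d) = S * (lam * (d ⬝ᵥ A *ᵥ d)) := by ring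
      _ ≤ S * R := mul_le_mul_of_nonneg_left hlamDR hS0
      _ ≤ (T * P) * R := mul_le_mul_of_nonneg_right hSTP hR0.le
      _ = P * (T * R) := by ring
  -- c ≤ 1
  have hSR : S ≤ R := by
    have himg : (∑ k ∈ Finset.univ.image f, (r k) ^ 2) = ∑ j : Fin m, (r (f j)) ^ 2 :=
      Finset.sum_image (f := fun k => (r k) ^ 2) (g := f) (fun a _ b _ h => hf h)
    rw [hS, hR, ← himg]
    exact Finset.sum_le_sum_of_subset_of_nonneg (Finset.subset_univ _) fun i _ _ => sq_nonneg _
  have hlamT : lam ≤ T := by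
    set j0 : Fin m := ⟨0, hm⟩
    have h1 : lam ≤ A (f j0) (f j0) := by
      have h2 := aux_rayleigh A hA.isHermitian (Pi.single (f j0) 1)
      rw [← hlam] at h2
      simpa [dotProduct, mulVec, Pi.single_apply, Finset.sum_ite_eq] using h2
    exact h1.trans (Finset.single_le_sum (f := fun j => A (f j) (f j))
      (fun j _ => (hdiagA (f j)).le) (Finset.mem_univ j0))
  have hc1 : (lam / T) * (S / R) ≤ 1 := by
    have h1 : lam / T ≤ 1 := div_le_one_of_le₀ hlamT hT0.le
    have h2 : S / R ≤ 1 := div_le_one_of_le₀ hSR hR0.le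
    have h4 : 0 ≤ S / R := div_nonneg hS0 hR0.le
    calc (lam / T) * (S / R) ≤ 1 * 1 := mul_le_mul h1 h2 h4 zero_le_one
      _ = 1 := mul_one 1
  -- finish
  rw [hcentral]
  have hfin : d ⬝ᵥ A *ᵥ d - P ≤ (1 - (lam / T) * (S / R)) * (d ⬝ᵥ A *ᵥ d) := by
    have hexp : (1 - (lam / T) * (S / R)) * (d ⬝ᵥ A *ᵥ d)
        = d ⬝ᵥ A *ᵥ d - (lam / T) * (S / R) * (d ⬝ᵥ A *ᵥ d) := by ring
    rw [hexp]
    linarith [hcDP]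
  calc Real.sqrt (d ⬝ᵥ A *ᵥ d - P)
      ≤ Real.sqrt ((1 - (lam / T) * (S / R)) * (d ⬝ᵥ A *ᵥ d)) := Real.sqrt_le_sqrt hfin
    _ = Real.sqrt (1 - (lam / T) * (S / R)) * Real.sqrt (d ⬝ᵥ A *ᵥ d) :=
        Real.sqrt_mul (by linarith [hc1]) _
end

section
/- With A SPD, d = A^{-1}b − x, r = b − Ax ≠ 0, and J containing the indices of the m components of r with largest absolute value, the contraction factor c = (1 − (λ_min(A)/Σ_{k∈J}a_{kk})(Σ_{k∈J}r_k²/Σ_{k=1}^n r_k²))^{1/2} satisfies 0 ≤ c < 1; in particular each projection step strictly reduces the A-norm of the error. -/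
open Matrix

/-- If `r ≠ 0` and `J` contains an index of a largest-magnitude component of `r`,
then the contraction factor
`c = (1 - (λ_min(A)/Σ_{k∈J}a_{kk})·(Σ_{k∈J}r_k²/Σ_k r_k²))^{1/2}`
satisfies `0 ≤ c < 1`. -/
theorem stmt9 {n m : ℕ} (hm : 0 < m) (A : Matrix (Fin n) (Fin n) ℝ) (hA : A.PosDef)
    (f : Fin m → Fin n) (hf : Function.Injective f)
    (b x r : Fin n → ℝ) (hr : r = b - A *ᵥ x) (hr0 : r ≠ 0)
    (hJ : ∃ j : Fin m, ∀ k : Fin n, |r k| ≤ |r (f j)|)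
    (c : ℝ)
    (hc : c = Real.sqrt (1 -
        ((⨅ i, hA.isHermitian.eigenvalues i) / ∑ j : Fin m, A (f j) (f j)) *
          ((∑ j : Fin m, (r (f j)) ^ 2) / ∑ k : Fin n, (r k) ^ 2))) :
    0 ≤ c ∧ c < 1 := by
  have hn : 0 < n := by
    rcases Nat.eq_zero_or_pos n with h | h
    · subst h; exact absurd (funext fun i => absurd i.2 (by omega)) hr0
    · exact h
  haveI : Nonempty (Fin n) := ⟨⟨0, hn⟩⟩
  haveI : Nonempty (Fin m) := ⟨⟨0, hm⟩⟩
  -- λ_min > 0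
  have heig : ∀ i, 0 < hA.isHermitian.eigenvalues i := hA.eigenvalues_pos
  have hmin : 0 < ⨅ i, hA.isHermitian.eigenvalues i := by
    obtain ⟨i, hi⟩ := Finite.exists_min hA.isHermitian.eigenvalues
    have : (⨅ i, hA.isHermitian.eigenvalues i) = hA.isHermitian.eigenvalues i :=
      le_antisymm (ciInf_le (Finite.bddBelow_range _) i) (le_ciInf hi)
    rw [this]; exact heig i
  -- diagonal entries positive
  have hdiag : ∀ i, 0 < A i i := fun i => by
    have := hA.dotProduct_mulVec_pos (x := Pi.single i 1) (by
      intro h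
      have := congrFun h i
      simp at this)
    simpa [dotProduct, mulVec, Pi.single_apply, Finset.sum_ite_eq] using this
  have hS1 : 0 < ∑ j : Fin m, A (f j) (f j) :=
    Finset.sum_pos (fun j _ => hdiag (f j)) ⟨⟨0, hm⟩, Finset.mem_univ _⟩
  -- sums of squares positive
  obtain ⟨j, hj⟩ := hJ
  obtain ⟨k, hk⟩ : ∃ k, r k ≠ 0 := by
    by_contra h
    push_neg at h
    exact hr0 (funext h)
  have hrfj : r (f j) ≠ 0 := by
    intro h
    have := hj k
    rw [h, abs_zero] at this
    exact hk (abs_eq_zero.mp (le_antisymm this (abs_nonneg _)))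
  have hS2 : 0 < ∑ j : Fin m, (r (f j)) ^ 2 :=
    Finset.sum_pos' (fun i _ => sq_nonneg _)
      ⟨j, Finset.mem_univ _, by positivity⟩
  have hS3 : 0 < ∑ k : Fin n, (r k) ^ 2 :=
    Finset.sum_pos' (fun i _ => sq_nonneg _)
      ⟨k, Finset.mem_univ _, by positivity⟩
  have hP : 0 < ((⨅ i, hA.isHermitian.eigenvalues i) / ∑ j : Fin m, A (f j) (f j)) *
      ((∑ j : Fin m, (r (f j)) ^ 2) / ∑ k : Fin n, (r k) ^ 2) := by positivity
  constructor
  · rw [hc]; exact Real.sqrt_nonneg _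
  · rw [hc]
    rw [Real.sqrt_lt' one_pos]
    nlinarith
end

section
/- Let A_{k+1} = [[A_k, v_k],[v_kᵀ, α]] be symmetric positive definite, z_k ∈ R^k arbitrary, and r_k = v_k − A_k z_k. Then δ = α − z_kᵀ(v_k + r_k) > 0. In particular the AIB algorithm with approximate solves is breakdown-free for SPD matrices. -/
open Matrix

/-- If the bordered matrix `[[A,v],[vᵀ,α]]` is SPD, `z` arbitrary and
`r = v - Az`, then `δ = α - zᵀ(v + r) > 0` (the AIB algorithm with approximate
solves is breakdown-free for SPD matrices). -/
theorem stmt14 {k : ℕ} (A : Matrix (Fin k) (Fin k) ℝ) (v : Fin k → ℝ) (α : ℝ)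
    (B : Matrix (Fin k ⊕ Fin 1) (Fin k ⊕ Fin 1) ℝ)
    (hB : B = fromBlocks A (Matrix.of fun i _ => v i) (Matrix.of fun _ j => v j)
      (Matrix.of fun _ _ => α))
    (hBpd : B.PosDef)
    (z : Fin k → ℝ) (r : Fin k → ℝ) (hr : r = v - A *ᵥ z) :
    0 < α - z ⬝ᵥ (v + r) := by
  set x : Fin k ⊕ Fin 1 → ℝ := Sum.elim (fun i => -z i) (fun _ => 1) with hxdef
  have hx0 : x ≠ 0 := fun h => by
    have := congrFun h (Sum.inr 0); simp [hxdef] at this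
  have hpos := (posDef_iff_dotProduct_mulVec.mp hBpd).2 hx0
  rw [star_trivial] at hpos
  have heq : x ⬝ᵥ B *ᵥ x = α - z ⬝ᵥ (v + r) := by
    subst hB hr
    simp [hxdef, fromBlocks_mulVec, dotProduct, Fintype.sum_sum_type, mulVec,
      Finset.mul_sum, Finset.sum_add_distrib, Finset.sum_sub_distrib, sub_mul, add_mul, mul_sub]
    simp [mul_add, mul_sub, Finset.mul_sum, Finset.sum_add_distrib, Finset.sum_sub_distrib]
    ring_nf
    simp [mul_comm]
    ring
  linarith [heq ▸ hpos]
end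

section
/- Let A be symmetric positive definite, b ∈ R^n, x ∈ R^n with r = b − Ax ≠ 0, and let J = {i} where i is an index with |r_i| = max_k |r_k|. Then Σ_{k∈J} r_k² ≥ ‖r‖₂²/n, so the single-step A-norm error reduction satisfies ‖d‖_A² − ‖d_new‖_A² ≥ ‖r‖₂²/(n · a_{ii}). -/
open Matrix

/-- With `r = b - Ax ≠ 0` and `i` an index of a largest-magnitude component of
`r`, taking `J = {i}`: `r_i² ≥ ‖r‖₂²/n` and the single-step A-norm error
reduction satisfies `‖d‖_A² - ‖d_new‖_A² ≥ ‖r‖₂²/(n · a_{ii})`. -/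
theorem stmt17 {n : ℕ} (A : Matrix (Fin n) (Fin n) ℝ) (hA : A.PosDef)
    (b x r : Fin n → ℝ) (hr : r = b - A *ᵥ x) (hr0 : r ≠ 0)
    (i : Fin n) (hi : ∀ k : Fin n, |r k| ≤ |r i|)
    (E : Matrix (Fin n) (Fin 1) ℝ)
    (hE : E = Matrix.of fun i' _ => if i' = i then (1 : ℝ) else 0)
    (y : Fin 1 → ℝ) (hy : y = (Eᵀ * A * E)⁻¹ *ᵥ (Eᵀ *ᵥ r))
    (xnew : Fin n → ℝ) (hxnew : xnew = x + E *ᵥ y)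
    (d dnew : Fin n → ℝ) (hd : d = A⁻¹ *ᵥ b - x) (hdnew : dnew = A⁻¹ *ᵥ b - xnew) :
    (r i) ^ 2 ≥ (r ⬝ᵥ r) / n ∧
      d ⬝ᵥ A *ᵥ d - dnew ⬝ᵥ A *ᵥ dnew ≥ (r ⬝ᵥ r) / (n * A i i) := by
  have hAii : 0 < A i i := by
    exact hA.diag_pos
  have hn : 0 < n := by
    rcases Nat.eq_zero_or_pos n with h | h
    · exact absurd (funext fun j => absurd j.2 (by omega)) hr0
    · exact h
  -- first conjunct
  have hrr : r ⬝ᵥ r ≤ n * (r i) ^ 2 := by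
    have : ∀ k : Fin n, r k * r k ≤ (r i) ^ 2 := fun k =>
      calc r k * r k = |r k| * |r k| := (abs_mul_abs_self _).symm
        _ ≤ |r i| * |r i| := mul_le_mul (hi k) (hi k) (abs_nonneg _) (abs_nonneg _)
        _ = (r i) ^ 2 := by rw [abs_mul_abs_self]; ring
    calc r ⬝ᵥ r = ∑ k, r k * r k := rfl
      _ ≤ ∑ _k : Fin n, (r i) ^ 2 := Finset.sum_le_sum fun k _ => this k
      _ = n * (r i) ^ 2 := by simp [mul_comm]
  have first : (r i) ^ 2 ≥ (r ⬝ᵥ r) / n := by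
    rw [ge_iff_le, div_le_iff₀ (by positivity)]
    linarith [hrr]
  refine ⟨first, ?_⟩
  -- A d = r
  have hAd : A *ᵥ d = r := by
    rw [hd, mulVec_sub, mulVec_mulVec, Matrix.mul_nonsing_inv _ hA.det_pos.ne'.isUnit,
      one_mulVec, ← hr]
  -- compute Eᵀ A E
  have hM : Eᵀ * A * E = Matrix.of fun _ _ => A i i := by
    ext a c
    fin_cases a; fin_cases c
    simp [hE, Matrix.mul_apply, transpose_apply, Finset.sum_ite_eq', Finset.sum_ite_eq]
  have hMinv : (Eᵀ * A * E)⁻¹ = Matrix.of fun _ _ => (A i i)⁻¹ := by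
    rw [hM, Matrix.inv_def]
    ext a c
    fin_cases a; fin_cases c
    simp [Matrix.det_fin_one, Matrix.adjugate_fin_one, Ring.inverse_eq_inv']
  have hEr : Eᵀ *ᵥ r = fun _ => r i := by
    ext a
    simp [hE, mulVec, dotProduct, transpose_apply, Finset.sum_ite_eq', Finset.sum_ite_eq]
  set c : ℝ := (A i i)⁻¹ * r i with hc
  have hyv : y = fun _ => c := by
    rw [hy, hMinv, hEr]
    ext a
    simp [mulVec, dotProduct, hc]
  have hv : E *ᵥ y = fun j => if j = i then c else 0 := by
    ext j
    simp [hE, hyv, mulVec, dotProduct]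
  -- dnew = d - E y
  have hdnew2 : dnew = d - E *ᵥ y := by
    rw [hdnew, hxnew, hd]; abel
  set v : Fin n → ℝ := E *ᵥ y with hvdef
  have hsymm : Aᵀ = A := hA.1
  have hdAv : d ⬝ᵥ A *ᵥ v = r ⬝ᵥ v := by
    rw [dotProduct_mulVec, ← mulVec_transpose, hsymm, hAd]
  have hrv : r ⬝ᵥ v = r i * c := by
    rw [hv]
    simp [dotProduct, Finset.sum_ite_eq', Finset.sum_ite_eq]
  have hvAv : v ⬝ᵥ A *ᵥ v = c * (A i i * c) := by
    rw [hv]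
    simp [dotProduct, mulVec, Finset.sum_ite_eq', Finset.sum_ite_eq, mul_ite]
  have hred : d ⬝ᵥ A *ᵥ d - dnew ⬝ᵥ A *ᵥ dnew = (r i) ^ 2 / A i i := by
    have hvAd : v ⬝ᵥ A *ᵥ d = r i * c := by rw [hAd, dotProduct_comm, hrv]
    rw [hdnew2, mulVec_sub, sub_dotProduct, dotProduct_sub, dotProduct_sub,
      hdAv, hrv, hvAd, hvAv, hc]
    field_simp
    ring
  rw [hred]
  rw [ge_iff_le, mul_comm, div_le_div_iff₀ (by positivity) hAii]
  nlinarith [hrr, hAii]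
end
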